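/- The function w(n,m) = 2cpq/(pq + 2c(mp+nq)) + 2c satisfies the lattice potential KdV equation (p−q+ŵ−w̃)(p+q+w−ŵ̃) = p²−q², where w̃(n,m)=w(n+1,m), ŵ(n,m)=w(n,m+1), ŵ̃(n,m)=w(n+1,m+1), at all lattice points where the denominators are nonzero. -/

import Mathlib

/-- The N=2 rational solution `w(n,m) = 2cpq/(pq + 2c(mp+nq)) + 2c` satisfies
the lattice potential KdV equation `(p−q+ŵ−w̃)(p+q+w−ŵ̃) = p²−q²`. -/
theorem stmt_1 (p q c : ℝ) (hp : p ≠ 0) (hq : q ≠ 0) (hc : c ≠ 0)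
    (w : ℤ → ℤ → ℝ)
    (hw : ∀ n m : ℤ, w n m = 2*c*p*q / (p*q + 2*c*((m : ℝ)*p + (n : ℝ)*q)) + 2*c)
    (n m : ℤ)
    (h1 : p*q + 2*c*((m : ℝ)*p + (n : ℝ)*q) ≠ 0)
    (h2 : p*q + 2*c*((m : ℝ)*p + ((n : ℝ)+1)*q) ≠ 0)
    (h3 : p*q + 2*c*(((m : ℝ)+1)*p + (n : ℝ)*q) ≠ 0)
    (h4 : p*q + 2*c*(((m : ℝ)+1)*p + ((n : ℝ)+1)*q) ≠ 0) :
    (p - q + w n (m+1) - w (n+1) m) * (p + q + w n m - w (n+1) (m+1)) = p^2 - q^2 := by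
  have e1 := hw n m
  have e2 := hw (n+1) m
  have e3 := hw n (m+1)
  have e4 := hw (n+1) (m+1)
  push_cast at e2 e3 e4
  rw [e1, e2, e3, e4]
  have h1' : p * q + 2 * c * (p * ↑m + q * ↑n) ≠ 0 := by convert h1 using 2; ring
  have h2' : p * q + 2 * c * (p * ↑m + q * (↑n + 1)) ≠ 0 := by convert h2 using 2; ring
  have h3' : p * q + 2 * c * (p * (↑m + 1) + q * ↑n) ≠ 0 := by convert h3 using 2; ring
  have h4' : p * q + 2 * c * (p * (↑m + 1) + q * (↑n + 1)) ≠ 0 := by convert h4 using 2; ring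
  field_simp
  ring
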